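/- With Φ : W → W the linear map defined by Φ(l_n) = −3 l_{n−2} for n even and Φ(l_n) = −(3/2) l_{n−2} for n odd, one has ω = d₁Φ, where ω(l_n,l_m) = 0 for n,m odd, ω(l_n,l_m) = 3(m−n) l_{n+m−2} for n,m even, ω(l_n,l_m) = 3(m−n−1) l_{n+m−2} for n odd, m even. Hence the cohomology class [ω] ∈ H²(W,W) vanishes. -/

import Mathlib

noncomputable section

/-- Bilinear extension of structure constants `C` to a bracket on `ℤ →₀ ℂ`. -/
def br (C : ℤ → ℤ → (ℤ →₀ ℂ)) (x y : ℤ →₀ ℂ) : ℤ →₀ ℂ :=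
  x.sum fun n a => y.sum fun m b => (a * b) • C n m

/-- Structure constants of the Witt algebra: `[l_n, l_m] = (m - n) l_{n+m}`. -/
def wittC (n m : ℤ) : ℤ →₀ ℂ := Finsupp.single (n + m) ((m : ℂ) - (n : ℂ))

/-- The cochain `ω`: `0` for `n,m` odd, `3(m-n) l_{n+m-2}` for `n,m` even,
`3(m-n-1) l_{n+m-2}` for `n` odd, `m` even, extended skew-symmetrically. -/
def omC (n m : ℤ) : ℤ →₀ ℂ :=
  if Odd n then
    if Odd m then 0
    else Finsupp.single (n + m - 2) (3 * ((m : ℂ) - n - 1))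
  else
    if Odd m then -Finsupp.single (n + m - 2) (3 * ((n : ℂ) - m - 1))
    else Finsupp.single (n + m - 2) (3 * ((m : ℂ) - n))

/-- The linear map `Φ(l_n) = -3 l_{n-2}` for `n` even, `Φ(l_n) = -(3/2) l_{n-2}` for `n` odd. -/
def Phi (x : ℤ →₀ ℂ) : ℤ →₀ ℂ :=
  x.sum fun n a => Finsupp.single (n - 2) (a * (if Even n then (-3 : ℂ) else -3 / 2))

lemma br_zero_left (C : ℤ → ℤ → (ℤ →₀ ℂ)) (y : ℤ →₀ ℂ) : br C 0 y = 0 := by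
  simp [br]

lemma br_zero_right (C : ℤ → ℤ → (ℤ →₀ ℂ)) (x : ℤ →₀ ℂ) : br C x 0 = 0 := by
  simp [br]

lemma br_add_left (C : ℤ → ℤ → (ℤ →₀ ℂ)) (x x' y : ℤ →₀ ℂ) :
    br C (x + x') y = br C x y + br C x' y := by
  unfold br
  apply Finsupp.sum_add_index'
  · intro n; simp
  · intro n a a'
    rw [← Finsupp.sum_add]
    refine Finsupp.sum_congr fun m _ => ?_
    rw [add_mul, add_smul]

lemma br_add_right (C : ℤ → ℤ → (ℤ →₀ ℂ)) (x y y' : ℤ →₀ ℂ) :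
    br C x (y + y') = br C x y + br C x y' := by
  unfold br
  rw [← Finsupp.sum_add]
  refine Finsupp.sum_congr fun n _ => ?_
  apply Finsupp.sum_add_index'
  · intro m; simp
  · intro m b b'; rw [mul_add, add_smul]

lemma br_single_single (C : ℤ → ℤ → (ℤ →₀ ℂ)) (n m : ℤ) (a b : ℂ) :
    br C (Finsupp.single n a) (Finsupp.single m b) = (a * b) • C n m := by
  unfold br
  rw [Finsupp.sum_single_index, Finsupp.sum_single_index]
  · simp
  · simp [Finsupp.sum]

lemma Phi_zero : Phi 0 = 0 := by simp [Phi]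

lemma Phi_add (x x' : ℤ →₀ ℂ) : Phi (x + x') = Phi x + Phi x' := by
  unfold Phi
  apply Finsupp.sum_add_index'
  · intro n; simp
  · intro n a a'; rw [add_mul, Finsupp.single_add]

lemma Phi_single (n : ℤ) (a : ℂ) :
    Phi (Finsupp.single n a) =
      Finsupp.single (n - 2) (a * (if Even n then (-3 : ℂ) else -3 / 2)) := by
  unfold Phi
  rw [Finsupp.sum_single_index]
  simp

/-- `ω = d₁Φ`, hence the cohomology class `[ω] ∈ H²(W,W)` vanishes. -/
theorem omega_is_coboundary (x y : ℤ →₀ ℂ) :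
    br omC x y = Phi (br wittC x y) - br wittC (Phi x) y - br wittC x (Phi y) := by
  induction x using Finsupp.induction_linear with
  | zero => simp [br_zero_left, Phi_zero, br_zero_right]
  | add x x' hx hx' =>
      simp only [br_add_left, Phi_add, hx, hx']
      abel
  | single n a =>
    induction y using Finsupp.induction_linear with
    | zero => simp [br_zero_right, Phi_zero, br_zero_left]
    | add y y' hy hy' =>
        simp only [br_add_right, Phi_add, hy, hy']
        abel
    | single m b =>
      rw [br_single_single, br_single_single, Phi_single, Phi_single,
        br_single_single, br_single_single]
      unfold wittC
      rw [Finsupp.smul_single, Phi_single]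
      have key : ∀ (i : ℤ) (c : ℂ), Finsupp.single (i - 2) c = Finsupp.single (i - 2) c := fun _ _ => rfl
      simp only [Finsupp.smul_single, smul_eq_mul]
      have e1 : n + m - 2 = n - 2 + m := by ring
      have e2 : n + m - 2 = n + (m - 2) := by ring
      rw [show n - 2 + m = n + m - 2 from by ring,
        show n + (m - 2) = n + m - 2 from by ring, ← Finsupp.single_sub, ← Finsupp.single_sub]
      unfold omC
      rcases Int.even_or_odd n with hn | hn <;> rcases Int.even_or_odd m with hm | hm
      · have hn' : ¬ Odd n := Int.not_odd_iff_even.mpr hn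
        have hm' : ¬ Odd m := Int.not_odd_iff_even.mpr hm
        have hnm : Even (n + m) := hn.add hm
        rw [if_neg hn', if_neg hm', if_pos hn, if_pos hm, if_pos hnm, Finsupp.smul_single,
          smul_eq_mul]
        congr 1
        obtain ⟨k, hk⟩ := hn; obtain ⟨j, hj⟩ := hm
        subst hk hj; push_cast; ring
      · have hn' : ¬ Odd n := Int.not_odd_iff_even.mpr hn
        have hm' : ¬ Even m := Int.not_even_iff_odd.mpr hm
        have hnm : ¬ Even (n + m) := fun h => hm' ((Int.even_add.mp h).mp hn)
        rw [if_neg hn', if_pos hm, if_pos hn, if_neg hm', if_neg hnm, smul_neg,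
          Finsupp.smul_single, smul_eq_mul, ← Finsupp.single_neg]
        congr 1
        obtain ⟨k, hk⟩ := hn; obtain ⟨j, hj⟩ := hm
        subst hk hj; push_cast; ring
      · have hn' : ¬ Even n := Int.not_even_iff_odd.mpr hn
        have hm' : ¬ Odd m := Int.not_odd_iff_even.mpr hm
        have hnm : ¬ Even (n + m) := fun h => hn' ((Int.even_add.mp h).mpr hm)
        rw [if_pos hn, if_neg hm', if_neg hn', if_pos hm, if_neg hnm, Finsupp.smul_single,
          smul_eq_mul]
        congr 1
        obtain ⟨k, hk⟩ := hn; obtain ⟨j, hj⟩ := hm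
        subst hk hj; push_cast; ring
      · have hn' : ¬ Even n := Int.not_even_iff_odd.mpr hn
        have hm' : ¬ Even m := Int.not_even_iff_odd.mpr hm
        have hnm : Even (n + m) := hn.add_odd hm
        rw [if_pos hn, if_pos hm, if_neg hn', if_neg hm', if_pos hnm, smul_zero, eq_comm,
          Finsupp.single_eq_zero]
        obtain ⟨k, hk⟩ := hn; obtain ⟨j, hj⟩ := hm
        subst hk hj; push_cast; ring
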